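/- Define C̃(α) = α + α^(3/2) (2/π) ∑_{k≥1} k^(−2) ∫_0^{1/α} √y sin(πk²/(2y)) dy for α > 0 (the series converges absolutely). Then there exists a constant M > 0 such that for all α ≥ 1: | C̃(α) − α | ≤ M α^(−1). -/

import Mathlib

open Real
open Filter MeasureTheory intervalIntegral Topology

lemma cfs_hasDeriv (c : ℝ) {y : ℝ} (hy : 0 < y) :
    HasDerivAt (fun y => y^2 * Real.sqrt y * Real.cos (c / y))
      ((5/2) * (y * Real.sqrt y) * Real.cos (c / y) + c * (Real.sqrt y * Real.sin (c / y))) y := by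
  have hs0 : 0 < Real.sqrt y := Real.sqrt_pos.mpr hy
  have h1 : HasDerivAt (fun y : ℝ => y^2 * Real.sqrt y)
      ((2*y^1)*Real.sqrt y + y^2 * (1/(2*Real.sqrt y))) y := by
    simpa using (hasDerivAt_pow 2 y).fun_mul (Real.hasDerivAt_sqrt hy.ne')
  have hinv : HasDerivAt (fun y : ℝ => c / y) (c * (-(y^2)⁻¹)) y := by
    simpa [div_eq_mul_inv] using (hasDerivAt_inv hy.ne').const_mul c
  have h2 : HasDerivAt (fun y : ℝ => Real.cos (c / y))
      ((-Real.sin (c/y)) * (c * (-(y^2)⁻¹))) y := (Real.hasDerivAt_cos _).comp y hinv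
  have h3 := h1.fun_mul h2
  refine h3.congr_deriv ?_
  have hsq : Real.sqrt y * Real.sqrt y = y := Real.mul_self_sqrt hy.le
  field_simp
  linear_combination (-y * Real.cos (c/y)) * hsq


lemma integrableOn_aux {f : ℝ → ℝ} (hf : Measurable f) {B ε : ℝ} (hε : 0 ≤ ε)
    (hb : ∀ y ∈ Set.Ioc (0:ℝ) ε, |f y| ≤ B) : IntervalIntegrable f volume 0 ε := by
  rw [intervalIntegrable_iff_integrableOn_Ioc_of_le hε]
  apply Integrable.mono' (g := fun _ => B)
  · exact integrableOn_const measure_Ioc_lt_top.ne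
  · exact hf.aestronglyMeasurable
  · filter_upwards [ae_restrict_mem measurableSet_Ioc] with y hy
    exact hb y hy

lemma meas_sin (c : ℝ) : Measurable (fun y : ℝ => Real.sqrt y * Real.sin (c / y)) :=
  Real.continuous_sqrt.measurable.mul (Real.measurable_sin.comp (measurable_const.div measurable_id))

lemma meas_cos (c : ℝ) : Measurable (fun y : ℝ => (y * Real.sqrt y) * Real.cos (c / y)) :=
  (measurable_id.mul Real.continuous_sqrt.measurable).mul
    (Real.measurable_cos.comp (measurable_const.div measurable_id))

lemma int_sin {c ε : ℝ} (hε : 0 ≤ ε) :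
    IntervalIntegrable (fun y => Real.sqrt y * Real.sin (c / y)) volume 0 ε := by
  apply integrableOn_aux (meas_sin c) hε (B := Real.sqrt ε)
  intro y hy
  rw [abs_mul]
  calc |Real.sqrt y| * |Real.sin (c/y)| ≤ Real.sqrt y * 1 := by
        rw [abs_of_nonneg (Real.sqrt_nonneg y)]
        exact mul_le_mul_of_nonneg_left (abs_le.mpr ⟨Real.neg_one_le_sin _, Real.sin_le_one _⟩) (Real.sqrt_nonneg y)
    _ ≤ Real.sqrt ε := by rw [mul_one]; exact Real.sqrt_le_sqrt hy.2

lemma int_cos {c ε : ℝ} (hε : 0 ≤ ε) :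
    IntervalIntegrable (fun y => (y * Real.sqrt y) * Real.cos (c / y)) volume 0 ε := by
  apply integrableOn_aux (meas_cos c) hε (B := ε * Real.sqrt ε)
  intro y hy
  rw [abs_mul]
  calc |y * Real.sqrt y| * |Real.cos (c/y)| ≤ |y * Real.sqrt y| * 1 :=
        mul_le_mul_of_nonneg_left (abs_le.mpr ⟨Real.neg_one_le_cos _, Real.cos_le_one _⟩) (abs_nonneg _)
    _ ≤ ε * Real.sqrt ε := by
        rw [mul_one, abs_of_nonneg (mul_nonneg hy.1.le (Real.sqrt_nonneg y))]
        exact mul_le_mul hy.2 (Real.sqrt_le_sqrt hy.2) (Real.sqrt_nonneg y) (hy.1.le.trans hy.2)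



lemma cfs_key {c eps : ℝ} (hc : 0 < c) (heps : 0 < eps) :
    |∫ y in (0:ℝ)..eps, Real.sqrt y * Real.sin (c / y)| ≤ (7/2) * (eps^2 * Real.sqrt eps) / c := by
  have int_sin : IntervalIntegrable (fun y => Real.sqrt y * Real.sin (c / y)) volume 0 eps :=
    int_sin heps.le
  have int_cos : IntervalIntegrable (fun y => (y * Real.sqrt y) * Real.cos (c / y)) volume 0 eps :=
    int_cos heps.le
  have cfs_hasDeriv : ∀ {y : ℝ}, 0 < y →
      HasDerivAt (fun y => y^2 * Real.sqrt y * Real.cos (c / y))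
        ((5/2) * ((y * Real.sqrt y) * Real.cos (c / y)) + c * (Real.sqrt y * Real.sin (c / y))) y :=
    fun hy => by simpa [mul_assoc] using cfs_hasDeriv c hy
  set f : ℝ → ℝ := fun y => Real.sqrt y * Real.sin (c / y) with hf
  set g : ℝ → ℝ := fun y => (y * Real.sqrt y) * Real.cos (c / y) with hg
  have hmono : ∀ δ : ℝ, 0 < δ → δ ≤ eps → Set.uIcc δ eps ⊆ Set.uIcc (0:ℝ) eps := by
    intro δ hδ hδε
    apply Set.uIcc_subset_uIcc _ Set.right_mem_uIcc
    rw [Set.uIcc_of_le heps.le]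
    exact ⟨hδ.le, hδε⟩
  have hmono0 : ∀ δ : ℝ, 0 < δ → δ ≤ eps → Set.uIcc 0 δ ⊆ Set.uIcc (0:ℝ) eps := by
    intro δ hδ hδε
    apply Set.uIcc_subset_uIcc Set.left_mem_uIcc
    rw [Set.uIcc_of_le heps.le]
    exact ⟨hδ.le, hδε⟩
  have ftc : ∀ δ : ℝ, 0 < δ → δ ≤ eps →
      (5/2) * (∫ y in δ..eps, g y) + c * (∫ y in δ..eps, f y)
        = eps^2 * Real.sqrt eps * Real.cos (c / eps) - δ^2 * Real.sqrt δ * Real.cos (c / δ) := by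
    intro δ hδ hδε
    have igδ := int_cos.mono_set (hmono δ hδ hδε)
    have ifδ := int_sin.mono_set (hmono δ hδ hδε)
    have h := integral_eq_sub_of_hasDerivAt (f := fun y => y^2 * Real.sqrt y * Real.cos (c / y))
      (f' := fun y => (5/2) * g y + c * f y) (a := δ) (b := eps)
      (fun y hy => by
        apply cfs_hasDeriv
        rw [Set.uIcc_of_le hδε] at hy
        exact lt_of_lt_of_le hδ hy.1)
      ((igδ.const_mul _).add (ifδ.const_mul _))
    rw [intervalIntegral.integral_add (igδ.const_mul _) (ifδ.const_mul _),
      intervalIntegral.integral_const_mul, intervalIntegral.integral_const_mul] at h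
    exact h
  have hev : ∀ᶠ δ : ℝ in 𝓝[>] 0, 0 < δ ∧ δ ≤ eps := by
    filter_upwards [self_mem_nhdsWithin, Ioo_mem_nhdsGT_of_mem ⟨le_refl (0:ℝ), heps⟩] with δ h1 h2
    exact ⟨h1, h2.2.le⟩
  have small : ∀ (h : ℝ → ℝ) (B : ℝ → ℝ),
      (∀ δ, 0 < δ → δ ≤ eps → ∀ y ∈ Set.uIoc (0:ℝ) δ, ‖h y‖ ≤ B δ)
      → Tendsto (fun δ => B δ * |δ - 0|) (𝓝[>] 0) (𝓝 0)
      → Tendsto (fun δ => ∫ y in (0:ℝ)..δ, h y) (𝓝[>] 0) (𝓝 0) := by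
    intro h B hB hBt
    apply squeeze_zero_norm' _ hBt
    filter_upwards [hev] with δ hδ
    exact intervalIntegral.norm_integral_le_of_norm_le_const (hB δ hδ.1 hδ.2)
  have tf0 : Tendsto (fun δ => ∫ y in (0:ℝ)..δ, f y) (𝓝[>] 0) (𝓝 0) := by
    apply small f (fun δ => Real.sqrt δ)
    · intro δ hδ hδε y hy
      rw [Set.uIoc_of_le hδ.le] at hy
      calc ‖f y‖ = |Real.sqrt y| * |Real.sin (c/y)| := abs_mul _ _
        _ ≤ Real.sqrt δ * 1 := by
            rw [abs_of_nonneg (Real.sqrt_nonneg y)]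
            exact mul_le_mul (Real.sqrt_le_sqrt hy.2)
              (abs_le.mpr ⟨Real.neg_one_le_sin _, Real.sin_le_one _⟩) (abs_nonneg _)
              (Real.sqrt_nonneg _)
        _ = Real.sqrt δ := mul_one _
    · have h2 : Tendsto (fun δ : ℝ => Real.sqrt δ * |δ - 0|) (𝓝 0) (𝓝 0) := by
        have hcont : Continuous (fun δ : ℝ => Real.sqrt δ * |δ - 0|) :=
          Real.continuous_sqrt.mul ((continuous_id.sub continuous_const).abs)
        simpa using hcont.tendsto 0
      exact h2.mono_left nhdsWithin_le_nhds
  have tg0 : Tendsto (fun δ => ∫ y in (0:ℝ)..δ, g y) (𝓝[>] 0) (𝓝 0) := by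
    apply small g (fun δ => δ * Real.sqrt δ)
    · intro δ hδ hδε y hy
      rw [Set.uIoc_of_le hδ.le] at hy
      calc ‖g y‖ = |y * Real.sqrt y| * |Real.cos (c/y)| := abs_mul _ _
        _ ≤ (δ * Real.sqrt δ) * 1 := by
            apply mul_le_mul _ (abs_le.mpr ⟨Real.neg_one_le_cos _, Real.cos_le_one _⟩)
              (abs_nonneg _) (mul_nonneg hδ.le (Real.sqrt_nonneg _))
            rw [abs_of_nonneg (mul_nonneg hy.1.le (Real.sqrt_nonneg y))]
            exact mul_le_mul hy.2 (Real.sqrt_le_sqrt hy.2) (Real.sqrt_nonneg _) hδ.le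
        _ = δ * Real.sqrt δ := mul_one _
    · have h2 : Tendsto (fun δ : ℝ => δ * Real.sqrt δ * |δ - 0|) (𝓝 0) (𝓝 0) := by
        have hcont : Continuous (fun δ : ℝ => δ * Real.sqrt δ * |δ - 0|) :=
          (continuous_id.mul Real.continuous_sqrt).mul ((continuous_id.sub continuous_const).abs)
        simpa using hcont.tendsto 0
      exact h2.mono_left nhdsWithin_le_nhds
  have split : ∀ (h : ℝ → ℝ), IntervalIntegrable h volume 0 eps → ∀ δ, 0 < δ → δ ≤ eps →
      (∫ y in δ..eps, h y) = (∫ y in (0:ℝ)..eps, h y) - ∫ y in (0:ℝ)..δ, h y := by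
    intro h hint δ hδ hδε
    have := intervalIntegral.integral_add_adjacent_intervals
      (hint.mono_set (hmono0 δ hδ hδε)) (hint.mono_set (hmono δ hδ hδε))
    linarith
  have tLHS : Tendsto (fun δ => (5/2) * (∫ y in δ..eps, g y) + c * (∫ y in δ..eps, f y)) (𝓝[>] 0)
      (𝓝 ((5/2) * (∫ y in (0:ℝ)..eps, g y) + c * (∫ y in (0:ℝ)..eps, f y))) := by
    have tg : Tendsto (fun δ => ∫ y in δ..eps, g y) (𝓝[>] 0) (𝓝 (∫ y in (0:ℝ)..eps, g y)) := by
      have h3 := (tendsto_const_nhds (x := ∫ y in (0:ℝ)..eps, g y) (f := 𝓝[>] (0:ℝ))).sub tg0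
      rw [sub_zero] at h3
      apply h3.congr'
      filter_upwards [hev] with δ hδ
      exact (split g int_cos δ hδ.1 hδ.2).symm
    have tf : Tendsto (fun δ => ∫ y in δ..eps, f y) (𝓝[>] 0) (𝓝 (∫ y in (0:ℝ)..eps, f y)) := by
      have h3 := (tendsto_const_nhds (x := ∫ y in (0:ℝ)..eps, f y) (f := 𝓝[>] (0:ℝ))).sub tf0
      rw [sub_zero] at h3
      apply h3.congr'
      filter_upwards [hev] with δ hδ
      exact (split f int_sin δ hδ.1 hδ.2).symm
    exact (tg.const_mul _).add (tf.const_mul _)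
  have tF0 : Tendsto (fun δ : ℝ => δ^2 * Real.sqrt δ * Real.cos (c / δ)) (𝓝[>] 0) (𝓝 0) := by
    apply squeeze_zero_norm' (a := fun δ : ℝ => δ^2 * Real.sqrt δ)
    · filter_upwards [hev] with δ hδ
      calc ‖δ^2 * Real.sqrt δ * Real.cos (c/δ)‖
          = |δ^2 * Real.sqrt δ| * |Real.cos (c/δ)| := abs_mul _ _
        _ ≤ |δ^2 * Real.sqrt δ| * 1 :=
            mul_le_mul_of_nonneg_left
              (abs_le.mpr ⟨Real.neg_one_le_cos _, Real.cos_le_one _⟩) (abs_nonneg _)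
        _ = δ^2 * Real.sqrt δ := by
            rw [mul_one, abs_of_nonneg (mul_nonneg (sq_nonneg _) (Real.sqrt_nonneg _))]
    · have h2 : Tendsto (fun δ : ℝ => δ^2 * Real.sqrt δ) (𝓝 0) (𝓝 0) := by
        have hcont : Continuous (fun δ : ℝ => δ^2 * Real.sqrt δ) :=
          (continuous_pow 2).mul Real.continuous_sqrt
        simpa using hcont.tendsto 0
      exact h2.mono_left nhdsWithin_le_nhds
  have tRHS : Tendsto (fun δ : ℝ =>
      eps^2 * Real.sqrt eps * Real.cos (c / eps) - δ^2 * Real.sqrt δ * Real.cos (c / δ))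
      (𝓝[>] 0) (𝓝 (eps^2 * Real.sqrt eps * Real.cos (c / eps))) := by
    have h3 := (tendsto_const_nhds
      (x := eps^2 * Real.sqrt eps * Real.cos (c / eps)) (f := 𝓝[>] (0:ℝ))).sub tF0
    simpa using h3
  have key : (5/2) * (∫ y in (0:ℝ)..eps, g y) + c * (∫ y in (0:ℝ)..eps, f y)
      = eps^2 * Real.sqrt eps * Real.cos (c / eps) := by
    apply tendsto_nhds_unique (tLHS.congr' _) tRHS
    filter_upwards [hev] with δ hδ
    exact (ftc δ hδ.1 hδ.2)
  have hI2 : |∫ y in (0:ℝ)..eps, g y| ≤ (eps * Real.sqrt eps) * eps := by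
    have h4 := intervalIntegral.norm_integral_le_of_norm_le_const (C := eps * Real.sqrt eps)
      (f := g) (a := (0:ℝ)) (b := eps) ?_
    · simpa [abs_of_nonneg heps.le] using h4
    · intro y hy
      rw [Set.uIoc_of_le heps.le] at hy
      calc ‖g y‖ = |y * Real.sqrt y| * |Real.cos (c/y)| := abs_mul _ _
        _ ≤ (eps * Real.sqrt eps) * 1 := by
            apply mul_le_mul _ (abs_le.mpr ⟨Real.neg_one_le_cos _, Real.cos_le_one _⟩)
              (abs_nonneg _) (mul_nonneg heps.le (Real.sqrt_nonneg _))
            rw [abs_of_nonneg (mul_nonneg hy.1.le (Real.sqrt_nonneg y))]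
            exact mul_le_mul hy.2 (Real.sqrt_le_sqrt hy.2) (Real.sqrt_nonneg _) heps.le
        _ = eps * Real.sqrt eps := mul_one _
  have hcI : c * |∫ y in (0:ℝ)..eps, f y| ≤ (7/2) * (eps^2 * Real.sqrt eps) := by
    have h1 : c * (∫ y in (0:ℝ)..eps, f y) = eps^2 * Real.sqrt eps * Real.cos (c / eps)
        - (5/2) * (∫ y in (0:ℝ)..eps, g y) := by linarith [key]
    have h2 : |c * (∫ y in (0:ℝ)..eps, f y)|
        ≤ eps^2 * Real.sqrt eps + (5/2) * ((eps * Real.sqrt eps) * eps) := by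
      rw [h1]
      apply (abs_sub _ _).trans
      gcongr
      · calc |eps^2 * Real.sqrt eps * Real.cos (c/eps)|
            = |eps^2 * Real.sqrt eps| * |Real.cos (c/eps)| := abs_mul _ _
          _ ≤ |eps^2 * Real.sqrt eps| * 1 :=
              mul_le_mul_of_nonneg_left
                (abs_le.mpr ⟨Real.neg_one_le_cos _, Real.cos_le_one _⟩) (abs_nonneg _)
          _ = eps^2 * Real.sqrt eps := by
              rw [mul_one, abs_of_nonneg (mul_nonneg (sq_nonneg _) (Real.sqrt_nonneg _))]
      · rw [abs_mul, abs_of_nonneg (by norm_num : (0:ℝ) ≤ 5/2)]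
        exact mul_le_mul_of_nonneg_left hI2 (by norm_num)
    rw [abs_mul, abs_of_nonneg hc.le] at h2
    nlinarith [h2]
  rw [le_div_iff₀ hc]
  calc |∫ y in (0:ℝ)..eps, f y| * c = c * |∫ y in (0:ℝ)..eps, f y| := mul_comm _ _
    _ ≤ (7/2) * (eps^2 * Real.sqrt eps) := hcI



/-- The alternate expression of the Conrey–Farmer–Soundararajan transition function,
`C̃(α) = α + α^(3/2) (2/π) ∑_{k≥1} k^(-2) ∫_0^{1/α} √y sin(πk²/(2y)) dy`. -/
noncomputable def CFSalt (α : ℝ) : ℝ :=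
  α + α ^ ((3:ℝ)/2) * (2 / Real.pi) *
    ∑' k : ℕ+, ((k : ℝ) ^ 2)⁻¹ *
      ∫ y in (0:ℝ)..(1/α), Real.sqrt y * Real.sin (Real.pi * (k : ℝ) ^ 2 / (2 * y))

/-- as `α → ∞`, `C̃(α) = α + O(α^(-1))`. -/
theorem CFSalt_at_infinity :
    ∃ M > (0:ℝ), ∀ α : ℝ, 1 ≤ α → |CFSalt α - α| ≤ M * α⁻¹ := by
  have hsum4 : Summable (fun k : ℕ+ => ((k : ℝ)^4)⁻¹) := by
    have h := (Real.summable_one_div_nat_pow (p := 4)).mpr (by norm_num)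
    have h2 : Summable (fun n : ℕ => ((n : ℝ)^4)⁻¹) := by simpa [one_div] using h
    exact h2.comp_injective PNat.coe_injective
  set G : ℝ := ∑' k : ℕ+, ((k : ℝ)^4)⁻¹ with hG
  have hGpos : 0 < G := by
    refine Summable.tsum_pos hsum4 (fun k => by positivity) 1 (by norm_num)
  refine ⟨(2 / Real.pi) * ((7 / Real.pi) * G), by positivity, ?_⟩
  intro α hα
  have hα0 : (0:ℝ) < α := lt_of_lt_of_le one_pos hα
  have hε0 : (0:ℝ) < 1/α := by positivity
  set T : ℝ := ∑' k : ℕ+, ((k : ℝ) ^ 2)⁻¹ *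
      ∫ y in (0:ℝ)..(1/α), Real.sqrt y * Real.sin (Real.pi * (k : ℝ) ^ 2 / (2 * y)) with hT
  set E : ℝ := (1/α)^2 * Real.sqrt (1/α) with hE
  have hEpos : 0 < E := by positivity
  have termbound : ∀ k : ℕ+,
      |((k : ℝ) ^ 2)⁻¹ * ∫ y in (0:ℝ)..(1/α),
          Real.sqrt y * Real.sin (Real.pi * (k : ℝ) ^ 2 / (2 * y))|
        ≤ ((7 / Real.pi) * E) * ((k : ℝ)^4)⁻¹ := by
    intro k
    have hk0 : (0:ℝ) < (k : ℝ) := by exact_mod_cast k.pos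
    have hc : (0:ℝ) < Real.pi * (k : ℝ)^2 / 2 := by positivity
    have hrw : (fun y : ℝ => Real.sqrt y * Real.sin (Real.pi * (k : ℝ) ^ 2 / (2 * y)))
        = fun y : ℝ => Real.sqrt y * Real.sin ((Real.pi * (k : ℝ)^2 / 2) / y) := by
      funext y
      rw [div_div]
    rw [abs_mul, hrw]
    have hkey := cfs_key hc hε0
    calc |((k : ℝ) ^ 2)⁻¹| * |∫ y in (0:ℝ)..(1/α),
          Real.sqrt y * Real.sin ((Real.pi * (k : ℝ)^2 / 2) / y)|
        ≤ ((k : ℝ) ^ 2)⁻¹ * ((7/2) * E / (Real.pi * (k : ℝ)^2 / 2)) := by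
          rw [abs_of_nonneg (by positivity)]
          exact mul_le_mul_of_nonneg_left hkey (by positivity)
      _ = ((7 / Real.pi) * E) * ((k : ℝ)^4)⁻¹ := by
          field_simp
  have hsumnorm : Summable (fun k : ℕ+ => ‖((k : ℝ) ^ 2)⁻¹ * ∫ y in (0:ℝ)..(1/α),
      Real.sqrt y * Real.sin (Real.pi * (k : ℝ) ^ 2 / (2 * y))‖) := by
    apply Summable.of_nonneg_of_le (fun k => norm_nonneg _) (fun k => termbound k)
    exact hsum4.mul_left _
  have hTbound : |T| ≤ ((7 / Real.pi) * E) * G := by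
    calc |T| ≤ ∑' k : ℕ+, ‖((k : ℝ) ^ 2)⁻¹ * ∫ y in (0:ℝ)..(1/α),
          Real.sqrt y * Real.sin (Real.pi * (k : ℝ) ^ 2 / (2 * y))‖ :=
        norm_tsum_le_tsum_norm hsumnorm
      _ ≤ ∑' k : ℕ+, ((7 / Real.pi) * E) * ((k : ℝ)^4)⁻¹ :=
        Summable.tsum_le_tsum (fun k => termbound k) hsumnorm (hsum4.mul_left _)
      _ = ((7 / Real.pi) * E) * G := tsum_mul_left
  have hdiff : CFSalt α - α = α ^ ((3:ℝ)/2) * (2 / Real.pi) * T := by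
    simp [CFSalt, hT]
  have hrpow : α ^ ((3:ℝ)/2) = α * Real.sqrt α := by
    rw [show (3:ℝ)/2 = 1 + 1/2 by norm_num, Real.rpow_add hα0, Real.rpow_one,
      ← Real.sqrt_eq_rpow]
  have hsα : (0:ℝ) < Real.sqrt α := Real.sqrt_pos.mpr hα0
  have hEα : (α * Real.sqrt α) * E = α⁻¹ := by
    rw [hE, one_div, Real.sqrt_inv]
    field_simp
  rw [hdiff, abs_mul, abs_of_nonneg (by positivity : (0:ℝ) ≤ α ^ ((3:ℝ)/2) * (2 / Real.pi))]
  calc α ^ ((3:ℝ)/2) * (2 / Real.pi) * |T|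
      ≤ α ^ ((3:ℝ)/2) * (2 / Real.pi) * (((7 / Real.pi) * E) * G) := by
        apply mul_le_mul_of_nonneg_left hTbound (by positivity)
    _ = (2 / Real.pi) * ((7 / Real.pi) * G) * α⁻¹ := by
        rw [hrpow, ← hEα]
        ring
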